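/- arXiv:2009.01201 — 5 statements merged into one kernel-verified Lean document; each statement's English description precedes it below -/
import Mathlib

section
/- The vector v_P satisfies (rec f*)(-v_P) + (rec g*)(v_P) = -‖v_P‖², where rec f* and rec g* are the recession functions of the Fenchel conjugates f* and g*. -/
open scoped InnerProductSpace Pointwise Classical
open Filter Topology

noncomputable section

variable {H : Type*} [NormedAddCommGroup H] [InnerProductSpace ℝ H]

/-- The effective domain of an extended-real-valued function. -/
def fdom {α : Type*} (f : α → EReal) : Set α := {x | f x ≠ ⊤}

/-- The Fenchel conjugate `f*(u) = sup_x (⟪x, u⟫ - f x)`. -/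
def fconj (f : H → EReal) : H → EReal :=
  fun u => ⨆ x : H, ((⟪x, u⟫_ℝ : ℝ) : EReal) - f x

/-- The recession function `(rec f)(y) = sup_{x ∈ dom f} (f (x + y) - f x)`. -/
def recFn (f : H → EReal) : H → EReal :=
  fun y => ⨆ x ∈ fdom f, (f (x + y) - f x)

/-- A proper function: never `-∞` and not identically `+∞`. -/
def ProperFn {α : Type*} (f : α → EReal) : Prop := (∀ x, f x ≠ ⊥) ∧ ∃ x, f x ≠ ⊤

/-- Convexity of an extended-real-valued function, via convexity of its epigraph. -/
def ConvexFn (f : H → EReal) : Prop :=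
  Convex ℝ {p : H × ℝ | f p.1 ≤ (p.2 : EReal)}

/-- `v` is the element of minimum norm of `S`, i.e. `v = P_S 0`, the metric
projection of `0` onto `S`. -/
def IsMinNormPoint (S : Set H) (v : H) : Prop := v ∈ S ∧ ∀ w ∈ S, ‖v‖ ≤ ‖w‖

/-- `p` is the metric projection of `x` onto `S`, i.e. `p = P_S x`. -/
def IsProjOn (S : Set H) (x p : H) : Prop := p ∈ S ∧ ∀ w ∈ S, dist x p ≤ dist x w

/-- The polar cone `S° = {u | ∀ x ∈ S, ⟪x, u⟫ ≤ 0}`. -/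
def polarCone (s : Set H) : Set H := {u | ∀ x ∈ s, ⟪x, u⟫_ℝ ≤ 0}

/-- The recession cone `rec S = {x | ∀ y ∈ S, x + y ∈ S}`. -/
def recCone (s : Set H) : Set H := {x | ∀ y ∈ s, x + y ∈ s}

/-- `p = prox_f w`: `p` minimizes `y ↦ f y + ½‖y - w‖²`. -/
def IsProxOf (f : H → EReal) (w p : H) : Prop :=
  ∀ y : H, f p + ((1 / 2 * ‖p - w‖ ^ 2 : ℝ) : EReal) ≤ f y + ((1 / 2 * ‖y - w‖ ^ 2 : ℝ) : EReal)


set_option linter.unusedSectionVars false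
set_option maxHeartbeats 1000000

section AuxLemmas

lemma term_le_fconj (f : H → EReal) (x u : H) :
    ((⟪x, u⟫_ℝ : ℝ) : EReal) - f x ≤ fconj f u :=
  le_iSup (fun x : H => ((⟪x, u⟫_ℝ : ℝ) : EReal) - f x) x

lemma fconj_ne_bot (f : H → EReal) (hp : ProperFn f) (u : H) : fconj f u ≠ ⊥ := by
  obtain ⟨x0, hx0⟩ := hp.2
  have h1 : ((⟪x0, u⟫_ℝ - (f x0).toReal : ℝ) : EReal) ≤ fconj f u := by
    have := term_le_fconj f x0 u
    rwa [← EReal.coe_toReal hx0 (hp.1 x0), ← EReal.coe_sub] at this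
  intro h
  rw [h, le_bot_iff] at h1
  exact EReal.coe_ne_bot _ h1

lemma lsc_closed_epi (f : H → EReal) (hf : LowerSemicontinuous f) :
    IsClosed {p : H × ℝ | f p.1 ≤ (p.2 : EReal)} := by
  rw [← isOpen_compl_iff, isOpen_iff_mem_nhds]
  rintro ⟨x, r⟩ hp
  simp only [Set.mem_compl_iff, Set.mem_setOf_eq, not_le] at hp
  obtain ⟨q, hq1, hq2⟩ := EReal.exists_between_coe_real hp
  have h1 : {z : H | (q : EReal) < f z} ∈ 𝓝 x := hf x _ hq2
  have h2 : Set.Iio q ∈ 𝓝 r := Iio_mem_nhds (by exact_mod_cast hq1)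
  rw [nhds_prod_eq]
  refine Filter.mem_of_superset (Filter.prod_mem_prod h1 h2) ?_
  rintro ⟨z, s⟩ ⟨hz, hs⟩
  simp only [Set.mem_compl_iff, Set.mem_setOf_eq, not_le]
  exact lt_trans (by exact_mod_cast hs) hz

lemma fdom_convex (f : H → EReal) (hp : ProperFn f) (hc : ConvexFn f) :
    Convex ℝ (fdom f) := by
  intro x hx y hy a b ha hb hab
  have hx' : (x, (f x).toReal) ∈ {p : H × ℝ | f p.1 ≤ (p.2 : EReal)} := by
    simp only [Set.mem_setOf_eq, EReal.coe_toReal hx (hp.1 x), le_refl]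
  have hy' : (y, (f y).toReal) ∈ {p : H × ℝ | f p.1 ≤ (p.2 : EReal)} := by
    simp only [Set.mem_setOf_eq, EReal.coe_toReal hy (hp.1 y), le_refl]
  have h := hc hx' hy' ha hb hab
  simp only [Prod.smul_mk, smul_eq_mul, Prod.mk_add_mk, Set.mem_setOf_eq] at h
  exact ne_top_of_le_ne_top (EReal.coe_ne_top _) h

lemma fconj_shift_le (f : H → EReal) (hp : ProperFn f) (u y : H) (s : ℝ)
    (hs : ∀ x ∈ fdom f, ⟪x, y⟫_ℝ ≤ s) :
    fconj f (u + y) ≤ fconj f u + (s : EReal) := by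
  apply iSup_le
  intro x
  by_cases hx : f x = ⊤
  · rw [hx, EReal.sub_top]; exact bot_le
  · have hfx : (((f x).toReal : ℝ) : EReal) = f x := EReal.coe_toReal hx (hp.1 x)
    have h1 : ((⟪x, u⟫_ℝ - (f x).toReal : ℝ) : EReal) ≤ fconj f u := by
      have := term_le_fconj f x u
      rwa [← hfx, ← EReal.coe_sub] at this
    have h2 : ((⟪x, y⟫_ℝ : ℝ) : EReal) ≤ (s : EReal) := by
      exact_mod_cast hs x hx
    have key : ((⟪x, u + y⟫_ℝ : ℝ) : EReal) - f x
        = ((⟪x, u⟫_ℝ - (f x).toReal : ℝ) : EReal) + ((⟪x, y⟫_ℝ : ℝ) : EReal) := by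
      conv_lhs => rw [← hfx]
      rw [← EReal.coe_sub, ← EReal.coe_add, EReal.coe_eq_coe_iff, inner_add_right]
      ring
    rw [key]
    exact add_le_add h1 h2

lemma recFn_fconj_le (f : H → EReal) (hp : ProperFn f) (y : H) (s : ℝ)
    (hs : ∀ x ∈ fdom f, ⟪x, y⟫_ℝ ≤ s) :
    recFn (fconj f) y ≤ (s : EReal) := by
  apply iSup₂_le
  intro u hu
  have hub : fconj f u ≠ ⊥ := fconj_ne_bot f hp u
  have hcu : (((fconj f u).toReal : ℝ) : EReal) = fconj f u := EReal.coe_toReal hu hub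
  rw [← hcu, EReal.sub_le_iff_le_add (Or.inl (EReal.coe_ne_bot _)) (Or.inl (EReal.coe_ne_top _))]
  calc fconj f (u + y) ≤ fconj f u + (s : EReal) := fconj_shift_le f hp u y s hs
    _ = (s : EReal) + (((fconj f u).toReal : ℝ) : EReal) := by rw [hcu, add_comm]

lemma inner_le_recFn_fconj (f : H → EReal) (hp : ProperFn f) (y : H) (u0 : H)
    (hu0 : fconj f u0 ≠ ⊤) (s : ℝ) (hs : ∀ x ∈ fdom f, ⟪x, y⟫_ℝ ≤ s)
    (x : H) (hx : x ∈ fdom f) :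
    ((⟪x, y⟫_ℝ : ℝ) : EReal) ≤ recFn (fconj f) y := by
  have hbot : ∀ u, fconj f u ≠ ⊥ := fconj_ne_bot f hp
  -- finiteness along the ray
  have hfin : ∀ n : ℕ, fconj f (u0 + (n : ℝ) • y) ≠ ⊤ := by
    intro n
    have hs' : ∀ z ∈ fdom f, ⟪z, (n : ℝ) • y⟫_ℝ ≤ (n : ℝ) * s := by
      intro z hz
      rw [real_inner_smul_right]
      exact mul_le_mul_of_nonneg_left (hs z hz) (Nat.cast_nonneg n)
    have h1 := fconj_shift_le f hp u0 ((n : ℝ) • y) ((n : ℝ) * s) hs'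
    have hcu : (((fconj f u0).toReal : ℝ) : EReal) = fconj f u0 := EReal.coe_toReal hu0 (hbot u0)
    rw [← hcu, ← EReal.coe_add] at h1
    exact ne_top_of_le_ne_top (EReal.coe_ne_top _) h1
  set φ : ℕ → ℝ := fun n => (fconj f (u0 + (n : ℝ) • y)).toReal with hφdef
  have hφ : ∀ n : ℕ, fconj f (u0 + (n : ℝ) • y) = ((φ n : ℝ) : EReal) :=
    fun n => (EReal.coe_toReal (hfin n) (hbot _)).symm
  -- each increment is below the recession function
  have hstep : ∀ n : ℕ, ((φ (n + 1) - φ n : ℝ) : EReal) ≤ recFn (fconj f) y := by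
    intro n
    have harg : (u0 + (n : ℝ) • y) + y = u0 + ((n : ℝ) + 1) • y := by
      rw [add_smul, one_smul, add_assoc]
    refine le_iSup₂_of_le (u0 + (n : ℝ) • y) (hfin n) ?_
    rw [harg, show ((n : ℝ) + 1) = ((n + 1 : ℕ) : ℝ) by push_cast; ring, hφ (n + 1), hφ n,
      ← EReal.coe_sub]
  -- growth estimate
  have hffx : (((f x).toReal : ℝ) : EReal) = f x := EReal.coe_toReal hx (hp.1 x)
  have hgrow : ∀ n : ℕ, ⟪x, u0⟫_ℝ + (n : ℝ) * ⟪x, y⟫_ℝ - (f x).toReal ≤ φ n := by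
    intro n
    have h1 := term_le_fconj f x (u0 + (n : ℝ) • y)
    rw [hφ n, ← hffx, ← EReal.coe_sub] at h1
    have h2 := EReal.coe_le_coe_iff.1 h1
    rw [inner_add_right, real_inner_smul_right] at h2
    linarith
  -- conclude via averages
  have main : ∀ ε : ℝ, 0 < ε → ((⟪x, y⟫_ℝ - ε : ℝ) : EReal) ≤ recFn (fconj f) y := by
    intro ε hε
    set D : ℝ := (f x).toReal + φ 0 - ⟪x, u0⟫_ℝ with hD
    set n : ℕ := ⌈D / ε⌉₊ + 1 with hn
    have hn0 : 0 < (n : ℝ) := by positivity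
    have hDn : D / (n : ℝ) < ε := by
      have h1 : D / ε < (n : ℝ) := by
        calc D / ε ≤ (⌈D / ε⌉₊ : ℝ) := Nat.le_ceil _
          _ < (n : ℝ) := by rw [hn]; push_cast; linarith
      have h2 : D < (n : ℝ) * ε := (div_lt_iff₀ hε).1 h1
      rw [div_lt_iff₀ hn0]
      linarith
    -- exists an increment at least the average
    have havg : ∃ i, (φ n - φ 0) / (n : ℝ) ≤ φ (i + 1) - φ i := by
      by_contra hc
      push_neg at hc
      have hsum : ∑ i ∈ Finset.range n, (φ (i + 1) - φ i) = φ n - φ 0 :=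
        Finset.sum_range_sub φ n
      have hlt : ∑ i ∈ Finset.range n, (φ (i + 1) - φ i)
          < ∑ _i ∈ Finset.range n, (φ n - φ 0) / (n : ℝ) := by
        apply Finset.sum_lt_sum_of_nonempty
        · exact Finset.nonempty_range_iff.2 (by omega)
        · intro i _; exact hc i
      rw [hsum, Finset.sum_const, Finset.card_range, nsmul_eq_mul,
        mul_div_cancel₀ _ (ne_of_gt hn0)] at hlt
      exact lt_irrefl _ hlt
    obtain ⟨i, hi⟩ := havg
    have hav : ⟪x, y⟫_ℝ - D / (n : ℝ) ≤ (φ n - φ 0) / (n : ℝ) := by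
      have hg := hgrow n
      rw [le_div_iff₀ hn0, sub_mul, div_mul_cancel₀ _ (ne_of_gt hn0)]
      rw [hD] at *
      nlinarith [hg]
    calc ((⟪x, y⟫_ℝ - ε : ℝ) : EReal) ≤ ((φ (i + 1) - φ i : ℝ) : EReal) := by
          apply EReal.coe_le_coe_iff.2
          have : ⟪x, y⟫_ℝ - ε ≤ ⟪x, y⟫_ℝ - D / (n : ℝ) := by linarith
          linarith [le_trans this (le_trans hav hi)]
      _ ≤ recFn (fconj f) y := hstep i
  by_contra hlt
  push_neg at hlt
  obtain ⟨q, hq1, hq2⟩ := EReal.exists_between_coe_real hlt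
  have hq3 : q < ⟪x, y⟫_ℝ := EReal.coe_lt_coe_iff.1 hq2
  have h4 := main (⟪x, y⟫_ℝ - q) (by linarith)
  rw [show ⟪x, y⟫_ℝ - (⟪x, y⟫_ℝ - q) = q by ring] at h4
  exact absurd hq1 (not_lt.2 h4)

lemma exists_fconj_ne_top [FiniteDimensional ℝ H] (f : H → EReal) (hp : ProperFn f)
    (hlsc : LowerSemicontinuous f) (hcvx : ConvexFn f) : ∃ u, fconj f u ≠ ⊤ := by
  haveI : CompleteSpace H := FiniteDimensional.complete ℝ H
  obtain ⟨x0, hx0⟩ := hp.2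
  set t0 : ℝ := (f x0).toReal with ht0
  have hfx0 : f x0 = (t0 : EReal) := (EReal.coe_toReal hx0 (hp.1 x0)).symm
  have hclosed := lsc_closed_epi f hlsc
  have hpt : ((x0, t0 - 1) : H × ℝ) ∉ {p : H × ℝ | f p.1 ≤ (p.2 : EReal)} := by
    simp only [Set.mem_setOf_eq, hfx0, not_le]
    exact_mod_cast sub_one_lt t0
  obtain ⟨ℓ, u, hu1, hu2⟩ := geometric_hahn_banach_point_closed hcvx hclosed hpt
  set b : ℝ := ℓ (0, 1) with hbdef
  have hsplit : ∀ x : H, ∀ r : ℝ, ℓ (x, r) = ℓ (x, 0) + r * b := by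
    intro x r
    have he : ((x, r) : H × ℝ) = (x, 0) + r • ((0 : H), (1 : ℝ)) := by
      simp [Prod.ext_iff]
    rw [he, map_add, map_smul, smul_eq_mul]
  have hb_pos : 0 < b := by
    have h1 : u < ℓ (x0, t0) := hu2 _ (by simp [Set.mem_setOf_eq, hfx0])
    have h2 : ℓ (x0, t0 - 1) < u := hu1
    rw [hsplit] at h1 h2
    nlinarith
  obtain ⟨w, hw⟩ : ∃ w : H, ∀ x : H, ⟪x, w⟫_ℝ = ℓ (x, 0) := by
    refine ⟨(InnerProductSpace.toDual ℝ H).symm (ℓ.comp (ContinuousLinearMap.inl ℝ H ℝ)), ?_⟩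
    intro x
    rw [real_inner_comm]
    simpa using InnerProductSpace.toDual_symm_apply
      (y := ℓ.comp (ContinuousLinearMap.inl ℝ H ℝ)) (x := x)
  refine ⟨(-(1 / b)) • w, ?_⟩
  have hbound : fconj f ((-(1 / b)) • w) ≤ ((-u / b : ℝ) : EReal) := by
    apply iSup_le
    intro x
    by_cases hx : f x = ⊤
    · rw [hx, EReal.sub_top]; exact bot_le
    · have hfx : (((f x).toReal : ℝ) : EReal) = f x := EReal.coe_toReal hx (hp.1 x)
      have hmem : u < ℓ (x, (f x).toReal) := by
        apply hu2
        simp only [Set.mem_setOf_eq, hfx, le_refl]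
      rw [hsplit] at hmem
      conv_lhs => rw [← hfx]
      rw [← EReal.coe_sub]
      apply EReal.coe_le_coe_iff.2
      have hip : ⟪x, (-(1 / b)) • w⟫_ℝ = -(1 / b) * ℓ (x, 0) := by
        rw [real_inner_smul_right, hw]
      rw [hip]
      have hbne : b ≠ 0 := ne_of_gt hb_pos
      rw [le_div_iff₀ hb_pos]
      field_simp
      nlinarith
  exact ne_top_of_le_ne_top (EReal.coe_ne_top _) hbound

end AuxLemmas

theorem douglasRachford_vP_recession_identity {H : Type*} [NormedAddCommGroup H] [InnerProductSpace ℝ H]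
    [FiniteDimensional ℝ H]
    (f g : H → EReal)
    (hf_prop : ProperFn f) (hf_lsc : LowerSemicontinuous f) (hf_cvx : ConvexFn f)
    (hg_prop : ProperFn g) (hg_lsc : LowerSemicontinuous g) (hg_cvx : ConvexFn g)
    (vP : H) (hvP : IsMinNormPoint (closure (fdom f - fdom g)) vP)
    : recFn (fconj f) (-vP) + recFn (fconj g) vP = ((-‖vP‖ ^ 2 : ℝ) : EReal) := by
  obtain ⟨hvmem, hvmin⟩ := hvP
  have hCconv : Convex ℝ (closure (fdom f - fdom g)) :=
    ((fdom_convex f hf_prop hf_cvx).sub (fdom_convex g hg_prop hg_cvx)).closure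
  -- the projection inequality for the min-norm point
  haveI : Nonempty ↥(closure (fdom f - fdom g)) := ⟨⟨vP, hvmem⟩⟩
  have hinf : ‖(0 : H) - vP‖ = ⨅ w : closure (fdom f - fdom g), ‖(0 : H) - w‖ := by
    apply le_antisymm
    · apply le_ciInf
      intro w
      simpa using hvmin w w.2
    · have hbdd : BddBelow (Set.range fun w : closure (fdom f - fdom g) => ‖(0 : H) - w‖) := by
        refine ⟨0, ?_⟩
        rintro r ⟨w, rfl⟩
        exact norm_nonneg _
      exact ciInf_le hbdd (⟨vP, hvmem⟩ : closure (fdom f - fdom g))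
  have hproj : ∀ w ∈ closure (fdom f - fdom g), ⟪w, -vP⟫_ℝ ≤ -‖vP‖ ^ 2 := by
    intro w hw
    have h := (norm_eq_iInf_iff_real_inner_le_zero hCconv hvmem).1 hinf w hw
    rw [zero_sub, inner_sub_right, inner_neg_left, inner_neg_left] at h
    rw [inner_neg_right]
    have h2 : ⟪vP, vP⟫_ℝ = ‖vP‖ ^ 2 := real_inner_self_eq_norm_sq vP
    have h3 : ⟪w, vP⟫_ℝ = ⟪vP, w⟫_ℝ := real_inner_comm vP w
    linarith
  obtain ⟨a0, ha0⟩ := hf_prop.2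
  obtain ⟨b0, hb0⟩ := hg_prop.2
  have hsub : ∀ a ∈ fdom f, ∀ b ∈ fdom g, ⟪a, -vP⟫_ℝ + ⟪b, vP⟫_ℝ ≤ -‖vP‖ ^ 2 := by
    intro a ha b hb
    have hm : a - b ∈ closure (fdom f - fdom g) := subset_closure (Set.sub_mem_sub ha hb)
    have h := hproj _ hm
    rw [inner_sub_left, inner_neg_right, inner_neg_right] at h
    rw [inner_neg_right]
    linarith
  -- the support values of the two domains are finite reals
  have hσf_le : (⨆ a ∈ fdom f, ((⟪a, -vP⟫_ℝ : ℝ) : EReal))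
      ≤ ((-‖vP‖ ^ 2 - ⟪b0, vP⟫_ℝ : ℝ) : EReal) := by
    apply iSup₂_le
    intro a ha
    exact EReal.coe_le_coe_iff.2 (by linarith [hsub a ha b0 hb0])
  have hσf_ge : ((⟪a0, -vP⟫_ℝ : ℝ) : EReal) ≤ ⨆ a ∈ fdom f, ((⟪a, -vP⟫_ℝ : ℝ) : EReal) :=
    le_iSup₂_of_le a0 ha0 le_rfl
  have hσg_le : (⨆ b ∈ fdom g, ((⟪b, vP⟫_ℝ : ℝ) : EReal))
      ≤ ((-‖vP‖ ^ 2 - ⟪a0, -vP⟫_ℝ : ℝ) : EReal) := by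
    apply iSup₂_le
    intro b hb
    exact EReal.coe_le_coe_iff.2 (by linarith [hsub a0 ha0 b hb])
  have hσg_ge : ((⟪b0, vP⟫_ℝ : ℝ) : EReal) ≤ ⨆ b ∈ fdom g, ((⟪b, vP⟫_ℝ : ℝ) : EReal) :=
    le_iSup₂_of_le b0 hb0 le_rfl
  set sf : ℝ := (⨆ a ∈ fdom f, ((⟪a, -vP⟫_ℝ : ℝ) : EReal)).toReal with hsfdef
  set sg : ℝ := (⨆ b ∈ fdom g, ((⟪b, vP⟫_ℝ : ℝ) : EReal)).toReal with hsgdef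
  have hsf : (⨆ a ∈ fdom f, ((⟪a, -vP⟫_ℝ : ℝ) : EReal)) = ((sf : ℝ) : EReal) :=
    (EReal.coe_toReal (ne_top_of_le_ne_top (EReal.coe_ne_top _) hσf_le)
      (lt_of_lt_of_le (EReal.bot_lt_coe _) hσf_ge).ne').symm
  have hsg : (⨆ b ∈ fdom g, ((⟪b, vP⟫_ℝ : ℝ) : EReal)) = ((sg : ℝ) : EReal) :=
    (EReal.coe_toReal (ne_top_of_le_ne_top (EReal.coe_ne_top _) hσg_le)
      (lt_of_lt_of_le (EReal.bot_lt_coe _) hσg_ge).ne').symm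
  have hsf_ub : ∀ a ∈ fdom f, ⟪a, -vP⟫_ℝ ≤ sf := by
    intro a ha
    have := le_iSup₂ (f := fun a (_ : a ∈ fdom f) => ((⟪a, -vP⟫_ℝ : ℝ) : EReal)) a ha
    rw [hsf] at this
    exact EReal.coe_le_coe_iff.1 this
  have hsg_ub : ∀ b ∈ fdom g, ⟪b, vP⟫_ℝ ≤ sg := by
    intro b hb
    have := le_iSup₂ (f := fun b (_ : b ∈ fdom g) => ((⟪b, vP⟫_ℝ : ℝ) : EReal)) b hb
    rw [hsg] at this
    exact EReal.coe_le_coe_iff.1 this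
  -- sum of the support values equals -‖vP‖²
  have hupper : sf + sg ≤ -‖vP‖ ^ 2 := by
    have h1 : ∀ b ∈ fdom g, ⟪b, vP⟫_ℝ ≤ -‖vP‖ ^ 2 - sf := by
      intro b hb
      have h2 : (⨆ a ∈ fdom f, ((⟪a, -vP⟫_ℝ : ℝ) : EReal))
          ≤ ((-‖vP‖ ^ 2 - ⟪b, vP⟫_ℝ : ℝ) : EReal) := by
        apply iSup₂_le
        intro a ha
        exact EReal.coe_le_coe_iff.2 (by linarith [hsub a ha b hb])
      rw [hsf] at h2
      have := EReal.coe_le_coe_iff.1 h2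
      linarith
    have h3 : (⨆ b ∈ fdom g, ((⟪b, vP⟫_ℝ : ℝ) : EReal))
        ≤ ((-‖vP‖ ^ 2 - sf : ℝ) : EReal) := by
      apply iSup₂_le
      intro b hb
      exact EReal.coe_le_coe_iff.2 (h1 b hb)
    rw [hsg] at h3
    have := EReal.coe_le_coe_iff.1 h3
    linarith
  have hlower : -‖vP‖ ^ 2 ≤ sf + sg := by
    have hSclosed : IsClosed {z : H | ⟪z, -vP⟫_ℝ ≤ sf + sg} :=
      isClosed_le (continuous_id.inner continuous_const) continuous_const
    have hsubS : fdom f - fdom g ⊆ {z : H | ⟪z, -vP⟫_ℝ ≤ sf + sg} := by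
      rintro z ⟨a, ha, b, hb, rfl⟩
      simp only [Set.mem_setOf_eq]
      rw [inner_sub_left, inner_neg_right, inner_neg_right]
      have h4 := hsf_ub a ha
      have h5 := hsg_ub b hb
      rw [inner_neg_right] at h4
      linarith
    have hvS : vP ∈ {z : H | ⟪z, -vP⟫_ℝ ≤ sf + sg} :=
      closure_minimal hsubS hSclosed hvmem
    have h6 : ⟪vP, -vP⟫_ℝ = -‖vP‖ ^ 2 := by
      rw [inner_neg_right, real_inner_self_eq_norm_sq]
    rw [Set.mem_setOf_eq, h6] at hvS
    exact hvS
  have hsum : sf + sg = -‖vP‖ ^ 2 := le_antisymm hupper hlower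
  -- identify the recession values
  obtain ⟨u0f, hu0f⟩ := exists_fconj_ne_top f hf_prop hf_lsc hf_cvx
  obtain ⟨u0g, hu0g⟩ := exists_fconj_ne_top g hg_prop hg_lsc hg_cvx
  have hrecf : recFn (fconj f) (-vP) = ((sf : ℝ) : EReal) := by
    apply le_antisymm (recFn_fconj_le f hf_prop (-vP) sf hsf_ub)
    rw [← hsf]
    exact iSup₂_le fun x hx => inner_le_recFn_fconj f hf_prop (-vP) u0f hu0f sf hsf_ub x hx
  have hrecg : recFn (fconj g) vP = ((sg : ℝ) : EReal) := by
    apply le_antisymm (recFn_fconj_le g hg_prop vP sg hsg_ub)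
    rw [← hsg]
    exact iSup₂_le fun x hx => inner_le_recFn_fconj g hg_prop vP u0g hu0g sg hsg_ub x hx
  rw [hrecf, hrecg, ← EReal.coe_add, hsum]


end
end

section
/- The vector -v_D belongs to (rec(cl dom f*))° ∩ (rec(cl dom g*))°, i.e., -v_D lies in the polar cone of the recession cone of cl(dom f*) and in the polar cone of the recession cone of cl(dom g*). -/
open scoped InnerProductSpace Pointwise Classical
open Filter Topology

noncomputable section

variable {H : Type*} [NormedAddCommGroup H] [InnerProductSpace ℝ H]

lemma fdom_fconj_convex (f : H → EReal) : Convex ℝ (fdom (fconj f)) := by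
  intro u hu v hv a b ha hb hab
  have hcu : fconj f u ≤ ((fconj f u).toReal : EReal) := EReal.le_coe_toReal hu
  have hcv : fconj f v ≤ ((fconj f v).toReal : EReal) := EReal.le_coe_toReal hv
  set cu := (fconj f u).toReal
  set cv := (fconj f v).toReal
  have hbound : fconj f (a • u + b • v) ≤ ((a * cu + b * cv : ℝ) : EReal) := by
    refine iSup_le fun x => ?_
    have hu' : ((⟪x, u⟫_ℝ : ℝ) : EReal) - f x ≤ (cu : EReal) :=
      le_trans (le_iSup (fun x => ((⟪x, u⟫_ℝ : ℝ) : EReal) - f x) x) hcu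
    have hv' : ((⟪x, v⟫_ℝ : ℝ) : EReal) - f x ≤ (cv : EReal) :=
      le_trans (le_iSup (fun x => ((⟪x, v⟫_ℝ : ℝ) : EReal) - f x) x) hcv
    rcases eq_top_or_lt_top (f x) with htop | hlt
    · rw [htop]
      simp
    · have hbot : f x ≠ ⊥ := by
        intro hb'
        rw [hb'] at hu'
        simp at hu'
      lift f x to ℝ using ⟨hlt.ne, hbot⟩ with r hr
      rw [← EReal.coe_sub, EReal.coe_le_coe_iff] at hu' hv' ⊢
      rw [inner_add_right, inner_smul_right, inner_smul_right]
      have hr' : a * r + b * r = r := by rw [← add_mul, hab, one_mul]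
      linarith [mul_le_mul_of_nonneg_left hu' ha, mul_le_mul_of_nonneg_left hv' hb]
  exact (lt_of_le_of_lt hbound (EReal.coe_lt_top _)).ne

lemma min_norm_inner_nonneg (S : Set H) (hconv : Convex ℝ S) (v : H)
    (hv : v ∈ S) (hmin : ∀ w ∈ S, ‖v‖ ≤ ‖w‖) (x : H) (hx : x + v ∈ S) :
    0 ≤ ⟪x, v⟫_ℝ := by
  by_contra hneg
  push_neg at hneg
  have hx0 : x ≠ 0 := by rintro rfl; simp at hneg
  set c := ⟪x, v⟫_ℝ with hc
  have hxsq : (0:ℝ) < ‖x‖^2 := pow_pos (norm_pos_iff.mpr hx0) 2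
  set t := min 1 (-c / ‖x‖^2) with ht
  have ht0 : 0 < t := lt_min one_pos (div_pos (by linarith) hxsq)
  have ht1 : t ≤ 1 := min_le_left _ _
  have htb : t * ‖x‖^2 ≤ -c := by
    have : t ≤ -c / ‖x‖^2 := min_le_right _ _
    calc t * ‖x‖^2 ≤ (-c / ‖x‖^2) * ‖x‖^2 := by nlinarith
    _ = -c := by field_simp
  have hmem : v + t • x ∈ S := by
    have h := hconv hv hx (by linarith : (0:ℝ) ≤ 1 - t) ht0.le (by ring)
    convert h using 1
    module
  have hle : ‖v‖ ≤ ‖v + t • x‖ := hmin _ hmem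
  have hsq : ‖v‖^2 ≤ ‖v + t • x‖^2 := by
    apply pow_le_pow_left₀ (norm_nonneg _) hle
  have hexp : ‖v + t • x‖^2 = ‖v‖^2 + 2*(t*c) + t^2*‖x‖^2 := by
    rw [norm_add_sq_real, inner_smul_right, norm_smul, real_inner_comm]
    simp [mul_pow]
    exact Or.inl hc.symm
  nlinarith [hsq, hexp, htb, ht0, hneg]

lemma recCone_closure_subset_add (A B : Set H) :
    recCone (closure A) ⊆ recCone (closure (A + B)) := by
  intro x hx w hw
  have h1 : Set.MapsTo (fun p => x + p) (A + B) (closure (A + B)) := by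
    rintro p ⟨a, ha, b, hb, rfl⟩
    have hxa : x + a ∈ closure A := hx a (subset_closure ha)
    have h2 := map_mem_closure (f := fun y => y + b) (t := closure (A + B))
      (continuous_add_right b) hxa (fun y hy => subset_closure (Set.add_mem_add hy hb))
    rw [closure_closure] at h2
    show x + (a + b) ∈ closure (A + B)
    rwa [← add_assoc]
  have := map_mem_closure (continuous_add_left x) hw h1
  rwa [closure_closure] at this


theorem neg_vD_mem_polar_recCones {H : Type*} [NormedAddCommGroup H] [InnerProductSpace ℝ H]
    [FiniteDimensional ℝ H]
    (f g : H → EReal)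
    (hf_prop : ProperFn f) (hf_lsc : LowerSemicontinuous f) (hf_cvx : ConvexFn f)
    (hg_prop : ProperFn g) (hg_lsc : LowerSemicontinuous g) (hg_cvx : ConvexFn g)
    (vD : H) (hvD : IsMinNormPoint (closure (fdom (fconj f) + fdom (fconj g))) vD)
    : -vD ∈ polarCone (recCone (closure (fdom (fconj f)))) ∩
      polarCone (recCone (closure (fdom (fconj g)))) := by
  obtain ⟨hvmem, hvmin⟩ := hvD
  set A := fdom (fconj f) with hA
  set B := fdom (fconj g) with hB
  have hD : Convex ℝ (closure (A + B)) :=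
    ((fdom_fconj_convex f).add (fdom_fconj_convex g)).closure
  constructor
  · intro x hx
    have hx' : x ∈ recCone (closure (A + B)) := recCone_closure_subset_add A B hx
    have h0 : 0 ≤ ⟪x, vD⟫_ℝ :=
      min_norm_inner_nonneg _ hD vD hvmem hvmin x (hx' vD hvmem)
    rw [inner_neg_right]; linarith
  · intro x hx
    have hx' : x ∈ recCone (closure (A + B)) := by
      rw [add_comm A B]
      exact recCone_closure_subset_add B A hx
    have h0 : 0 ≤ ⟪x, vD⟫_ℝ :=
      min_norm_inner_nonneg _ hD vD hvmem hvmin x (hx' vD hvmem)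
    rw [inner_neg_right]; linarith

end
end

section
/- The vector -v_P belongs to rec(cl dom f*) ∩ rec(-cl dom g*), i.e., -v_P lies in the recession cone of cl(dom f*) and in the recession cone of -cl(dom g*). -/
open scoped InnerProductSpace Pointwise Classical
open Filter Topology

noncomputable section

variable {H : Type*} [NormedAddCommGroup H] [InnerProductSpace ℝ H]

lemma aux_fdom_convex (f : H → EReal) (hp : ∀ x, f x ≠ ⊥) (hc : ConvexFn f) :
    Convex ℝ (fdom f) := by
  intro x hx y hy a b ha hb hab
  have hx' : ((f x).toReal : EReal) = f x := EReal.coe_toReal hx (hp x)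
  have hy' : ((f y).toReal : EReal) = f y := EReal.coe_toReal hy (hp y)
  have hX : ((x, (f x).toReal) : H × ℝ) ∈ {p : H × ℝ | f p.1 ≤ (p.2 : EReal)} := hx'.ge
  have hY : ((y, (f y).toReal) : H × ℝ) ∈ {p : H × ℝ | f p.1 ≤ (p.2 : EReal)} := hy'.ge
  have := hc hX hY ha hb hab
  simp only [Prod.smul_mk, Prod.mk_add_mk, Set.mem_setOf_eq, smul_eq_mul] at this
  intro htop
  rw [htop] at this
  exact (lt_irrefl _ (lt_of_le_of_lt this (EReal.coe_lt_top _)))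

lemma aux_minNorm_inner (S : Set H) (hS : Convex ℝ S) (v : H)
    (h : IsMinNormPoint S v) : ∀ w ∈ S, ‖v‖ ^ 2 ≤ ⟪w, v⟫_ℝ := by
  haveI : Nonempty S := ⟨⟨v, h.1⟩⟩
  have hnorm : ‖(0 : H) - v‖ = ⨅ w : S, ‖(0 : H) - (w : H)‖ := by
    apply le_antisymm
    · exact le_ciInf fun w => by simpa using h.2 w w.2
    · exact ciInf_le ⟨0, fun r ⟨w, hw⟩ => hw ▸ norm_nonneg _⟩ (⟨v, h.1⟩ : S)
  have := (norm_eq_iInf_iff_real_inner_le_zero hS h.1).mp hnorm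
  intro w hw
  have h2 := this w hw
  rw [zero_sub, inner_neg_left, inner_sub_right, real_inner_self_eq_norm_sq] at h2
  have : ‖v‖ ^ 2 ≤ ⟪v, w⟫_ℝ := by linarith
  rwa [real_inner_comm]

lemma aux_recCone_fconj (f : H → EReal) (hp : ∀ x, f x ≠ ⊥) (d : H) (M : ℝ)
    (hM : ∀ x ∈ fdom f, ⟪x, d⟫_ℝ ≤ M) : d ∈ recCone (fdom (fconj f)) := by
  intro u hu
  have hu' : fconj f u ≠ ⊤ := hu
  have key : fconj f (d + u) ≤ fconj f u + (M : EReal) := by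
    apply iSup_le
    intro x
    by_cases hx : f x = ⊤
    · rw [hx, EReal.sub_top]; exact bot_le
    · have hr : ((f x).toReal : EReal) = f x := EReal.coe_toReal hx (hp x)
      set r := (f x).toReal with hrdef
      have hreal : ⟪x, d + u⟫_ℝ - r ≤ (⟪x, u⟫_ℝ - r) + M := by
        rw [inner_add_right]
        have := hM x hx
        linarith
      calc ((⟪x, d + u⟫_ℝ : ℝ) : EReal) - f x
          = ((⟪x, d + u⟫_ℝ - r : ℝ) : EReal) := by rw [EReal.coe_sub, hr]
        _ ≤ ((⟪x, u⟫_ℝ - r : ℝ) : EReal) + (M : EReal) := by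
            rw [← EReal.coe_add]; exact_mod_cast EReal.coe_le_coe_iff.mpr hreal
        _ = (((⟪x, u⟫_ℝ : ℝ) : EReal) - f x) + (M : EReal) := by rw [EReal.coe_sub, hr]
        _ ≤ fconj f u + (M : EReal) := by
            exact add_le_add_left (le_iSup (fun x => ((⟪x, u⟫_ℝ : ℝ) : EReal) - f x) x) _
  intro htop
  rw [htop] at key
  exact (EReal.add_lt_top hu' (EReal.coe_ne_top M)).ne (top_le_iff.mp key)

lemma aux_recCone_closure (S : Set H) (d : H) (h : d ∈ recCone S) :
    d ∈ recCone (closure S) := by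
  intro y hy
  exact map_mem_closure (continuous_const.add continuous_id) hy (fun z hz => h z hz)

theorem neg_vP_mem_recCones_of_conjugates {H : Type*} [NormedAddCommGroup H] [InnerProductSpace ℝ H]
    [FiniteDimensional ℝ H]
    (f g : H → EReal)
    (hf_prop : ProperFn f) (hf_lsc : LowerSemicontinuous f) (hf_cvx : ConvexFn f)
    (hg_prop : ProperFn g) (hg_lsc : LowerSemicontinuous g) (hg_cvx : ConvexFn g)
    (vP : H) (hvP : IsMinNormPoint (closure (fdom f - fdom g)) vP)
    : -vP ∈ recCone (closure (fdom (fconj f))) ∩ recCone (-closure (fdom (fconj g))) := by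
  obtain ⟨x₀, hx₀⟩ := hf_prop.2
  obtain ⟨y₀, hy₀⟩ := hg_prop.2
  have hSconv : Convex ℝ (closure (fdom f - fdom g)) :=
    ((aux_fdom_convex f hf_prop.1 hf_cvx).sub (aux_fdom_convex g hg_prop.1 hg_cvx)).closure
  have hineq := aux_minNorm_inner _ hSconv vP hvP
  -- bound for f
  have hMf : ∀ x ∈ fdom f, ⟪x, -vP⟫_ℝ ≤ -‖vP‖ ^ 2 - ⟪y₀, vP⟫_ℝ := by
    intro x hx
    have hmem : x - y₀ ∈ closure (fdom f - fdom g) :=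
      subset_closure (Set.sub_mem_sub hx hy₀)
    have := hineq _ hmem
    rw [inner_sub_left] at this
    rw [inner_neg_right]
    linarith
  -- bound for g
  have hMg : ∀ y ∈ fdom g, ⟪y, vP⟫_ℝ ≤ ⟪x₀, vP⟫_ℝ - ‖vP‖ ^ 2 := by
    intro y hy
    have hmem : x₀ - y ∈ closure (fdom f - fdom g) :=
      subset_closure (Set.sub_mem_sub hx₀ hy)
    have := hineq _ hmem
    rw [inner_sub_left] at this
    linarith
  have hf' : -vP ∈ recCone (closure (fdom (fconj f))) :=
    aux_recCone_closure _ _ (aux_recCone_fconj f hf_prop.1 (-vP) _ hMf)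
  have hg' : vP ∈ recCone (closure (fdom (fconj g))) :=
    aux_recCone_closure _ _ (aux_recCone_fconj g hg_prop.1 vP _ hMg)
  refine ⟨hf', ?_⟩
  intro y hy
  rw [Set.mem_neg] at hy ⊢
  have : vP + -y ∈ closure (fdom (fconj g)) := hg' _ hy
  simpa [neg_add, neg_neg, add_comm] using this


end
end

section
/- The vectors v_P and v_D are orthogonal: ⟨v_P, v_D⟩ = 0. -/
open scoped InnerProductSpace Pointwise Classical
open Filter Topology

noncomputable section

variable {H : Type*} [NormedAddCommGroup H] [InnerProductSpace ℝ H]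

lemma isMinNorm_inner {S : Set H} (hS : Convex ℝ S) {v : H} (hv : IsMinNormPoint S v)
    {w : H} (hw : w ∈ S) : 0 ≤ ⟪v, w - v⟫_ℝ := by
  by_contra hlt
  push_neg at hlt
  set a := ⟪v, w - v⟫_ℝ with ha
  have hwv : w - v ≠ 0 := by
    intro h; rw [ha, h, inner_zero_right] at hlt; exact lt_irrefl _ hlt
  have hBpos : (0:ℝ) < ‖w - v‖ ^ 2 := pow_pos (norm_pos_iff.mpr hwv) 2
  set B := ‖w - v‖ ^ 2 with hB
  set t := min 1 (-a / B) with htdef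
  have ht0 : 0 < t := lt_min one_pos (div_pos (neg_pos.mpr hlt) hBpos)
  have ht1 : t ≤ 1 := min_le_left _ _
  have htB : t * B ≤ -a := by
    have h := min_le_right 1 (-a / B)
    calc t * B ≤ (-a / B) * B := by nlinarith
      _ = -a := by field_simp
  have hz : v + t • (w - v) ∈ S := by
    have hcomb := hS hv.1 hw (by linarith : (0:ℝ) ≤ 1 - t) ht0.le (by ring)
    have : (1 - t) • v + t • w = v + t • (w - v) := by module
    rwa [this] at hcomb
  have hle := hv.2 _ hz
  have hsq : ‖v‖ ^ 2 ≤ ‖v + t • (w - v)‖ ^ 2 := pow_le_pow_left₀ (norm_nonneg v) hle 2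
  rw [norm_add_sq_real, real_inner_smul_right, norm_smul, Real.norm_eq_abs] at hsq
  have habs : (|t| * ‖w - v‖) ^ 2 = t ^ 2 * B := by rw [mul_pow, sq_abs, hB]
  nlinarith

lemma fdom_fconj_shift (f : H → EReal) (hp : ProperFn f) (e : H) (M : ℝ)
    (hM : ∀ x, f x ≠ ⊤ → ⟪x, e⟫_ℝ ≤ M) {u : H} (hu : u ∈ fdom (fconj f)) :
    u + e ∈ fdom (fconj f) := by
  obtain ⟨x₀, hx₀⟩ := hp.2
  have hmem : ∀ v : H, ∀ x : H, f x ≠ ⊤ → ((⟪x, v⟫_ℝ - (f x).toReal : ℝ) : EReal) ≤ fconj f v := by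
    intro v x hx
    have hfx : ((f x).toReal : EReal) = f x := EReal.coe_toReal hx (hp.1 x)
    have : ((⟪x, v⟫_ℝ - (f x).toReal : ℝ) : EReal) = ((⟪x, v⟫_ℝ : ℝ) : EReal) - f x := by
      rw [EReal.coe_sub, hfx]
    rw [this]
    exact le_iSup (fun x => ((⟪x, v⟫_ℝ : ℝ) : EReal) - f x) x
  have hle : fconj f (u + e) ≤ fconj f u + (M : EReal) := by
    refine iSup_le fun x => ?_
    by_cases hx : f x = ⊤
    · rw [hx, EReal.sub_top]; exact bot_le
    · have hfx : ((f x).toReal : EReal) = f x := EReal.coe_toReal hx (hp.1 x)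
      have hin : ⟪x, u + e⟫_ℝ = ⟪x, u⟫_ℝ + ⟪x, e⟫_ℝ := inner_add_right _ _ _
      rw [hin, ← hfx, ← EReal.coe_sub]
      calc ((⟪x, u⟫_ℝ + ⟪x, e⟫_ℝ - (f x).toReal : ℝ) : EReal)
          ≤ ((⟪x, u⟫_ℝ - (f x).toReal + M : ℝ) : EReal) := by
            apply EReal.coe_le_coe_iff.mpr; have := hM x hx; linarith
        _ = ((⟪x, u⟫_ℝ - (f x).toReal : ℝ) : EReal) + (M : EReal) := by
            rw [EReal.coe_add]
        _ ≤ fconj f u + (M : EReal) := add_le_add_left (hmem u x hx) _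
  have hbot : fconj f u ≠ ⊥ := by
    intro h
    have := hmem u x₀ hx₀
    rw [h, le_bot_iff] at this
    exact EReal.coe_ne_bot _ this
  have hco : (((fconj f u).toReal : ℝ) : EReal) = fconj f u := EReal.coe_toReal hu hbot
  show fconj f (u + e) ≠ ⊤
  intro htop
  rw [htop, top_le_iff] at hle
  rw [← hco, ← EReal.coe_add] at hle
  exact EReal.coe_ne_top _ hle

theorem inner_vP_vD_eq_zero {H : Type*} [NormedAddCommGroup H] [InnerProductSpace ℝ H]
    [FiniteDimensional ℝ H]
    (f g : H → EReal)
    (hf_prop : ProperFn f) (hf_lsc : LowerSemicontinuous f) (hf_cvx : ConvexFn f)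
    (hg_prop : ProperFn g) (hg_lsc : LowerSemicontinuous g) (hg_cvx : ConvexFn g)
    (vP : H) (hvP : IsMinNormPoint (closure (fdom f - fdom g)) vP)
    (vD : H) (hvD : IsMinNormPoint (closure (fdom (fconj f) + fdom (fconj g))) vD)
    : ⟪vP, vD⟫_ℝ = 0 := by
  obtain ⟨x₀, hx₀⟩ := hf_prop.2
  obtain ⟨y₀, hy₀⟩ := hg_prop.2
  have hCconv : Convex ℝ (closure (fdom f - fdom g)) :=
    ((fdom_convex f hf_prop hf_cvx).sub (fdom_convex g hg_prop hg_cvx)).closure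
  have hkey : ∀ w ∈ closure (fdom f - fdom g), 0 ≤ ⟪vP, w - vP⟫_ℝ :=
    fun w hw => isMinNorm_inner hCconv hvP hw
  -- lower bound for x ∈ dom f
  have hf_ub : ∀ x ∈ fdom f, ⟪y₀, vP⟫_ℝ ≤ ⟪x, vP⟫_ℝ := by
    intro x hx
    have hw : x - y₀ ∈ closure (fdom f - fdom g) := subset_closure (Set.sub_mem_sub hx hy₀)
    have h := hkey _ hw
    rw [inner_sub_right, inner_sub_right, real_inner_self_eq_norm_sq] at h
    have h1 : ⟪vP, y₀⟫_ℝ ≤ ⟪vP, x⟫_ℝ := by nlinarith [sq_nonneg ‖vP‖]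
    linarith [real_inner_comm vP y₀, real_inner_comm vP x]
  have hg_ub : ∀ y ∈ fdom g, ⟪y, vP⟫_ℝ ≤ ⟪x₀, vP⟫_ℝ := by
    intro y hy
    have hw : x₀ - y ∈ closure (fdom f - fdom g) := subset_closure (Set.sub_mem_sub hx₀ hy)
    have h := hkey _ hw
    rw [inner_sub_right, inner_sub_right, real_inner_self_eq_norm_sq] at h
    have h1 : ⟪vP, y⟫_ℝ ≤ ⟪vP, x₀⟫_ℝ := by nlinarith [sq_nonneg ‖vP‖]
    linarith [real_inner_comm vP y, real_inner_comm vP x₀]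
  -- both directions ±vP are recession directions of dom f* + dom g*
  have hmap : ∀ s : ℝ, Set.MapsTo (fun z => z + s • vP)
      (fdom (fconj f) + fdom (fconj g)) (fdom (fconj f) + fdom (fconj g)) := by
    intro s p hp
    rw [Set.mem_add] at hp
    obtain ⟨u, hu, v, hv, rfl⟩ := hp
    rcases le_or_gt 0 s with hs | hs
    · have hv' : v + s • vP ∈ fdom (fconj g) := by
        refine fdom_fconj_shift g hg_prop (s • vP) (s * ⟪x₀, vP⟫_ℝ) (fun y hy => ?_) hv
        rw [real_inner_smul_right]
        exact mul_le_mul_of_nonneg_left (hg_ub y hy) hs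
      show u + v + s • vP ∈ _
      rw [show u + v + s • vP = u + (v + s • vP) by abel]
      exact Set.add_mem_add hu hv'
    · have hu' : u + s • vP ∈ fdom (fconj f) := by
        refine fdom_fconj_shift f hf_prop (s • vP) (s * ⟪y₀, vP⟫_ℝ) (fun x hx => ?_) hu
        rw [real_inner_smul_right]
        exact mul_le_mul_of_nonpos_left (hf_ub x hx) hs.le
      show u + v + s • vP ∈ _
      rw [show u + v + s • vP = (u + s • vP) + v by abel]
      exact Set.add_mem_add hu' hv
  have hmem : ∀ s : ℝ, vD + s • vP ∈ closure (fdom (fconj f) + fdom (fconj g)) := by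
    intro s
    exact (hmap s).closure (continuous_id.add continuous_const) hvD.1
  have key : ∀ s : ℝ, 0 ≤ 2 * (s * ⟪vD, vP⟫_ℝ) + s ^ 2 * ‖vP‖ ^ 2 := by
    intro s
    have hle := hvD.2 _ (hmem s)
    have hsq : ‖vD‖ ^ 2 ≤ ‖vD + s • vP‖ ^ 2 := pow_le_pow_left₀ (norm_nonneg vD) hle 2
    rw [norm_add_sq_real, real_inner_smul_right, norm_smul, Real.norm_eq_abs] at hsq
    have habs : (|s| * ‖vP‖) ^ 2 = s ^ 2 * ‖vP‖ ^ 2 := by rw [mul_pow, sq_abs]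
    nlinarith
  by_cases h0 : vP = 0
  · simp [h0]
  · have hb : (0:ℝ) < ‖vP‖ ^ 2 := pow_pos (norm_pos_iff.mpr h0) 2
    set a := ⟪vD, vP⟫_ℝ with hadef
    have h := key (-a / ‖vP‖ ^ 2)
    have ha2 : a ^ 2 ≤ 0 := by
      have hcomp : 2 * (-a / ‖vP‖ ^ 2 * a) + (-a / ‖vP‖ ^ 2) ^ 2 * ‖vP‖ ^ 2
          = -(a ^ 2) / ‖vP‖ ^ 2 := by field_simp; ring
      rw [hcomp] at h
      have hc : -a ^ 2 / ‖vP‖ ^ 2 * ‖vP‖ ^ 2 = -a ^ 2 := div_mul_cancel₀ _ (ne_of_gt hb)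
      nlinarith [mul_nonneg h hb.le]
    have : a = 0 := by nlinarith [sq_nonneg a]
    have hcm : ⟪vP, vD⟫_ℝ = a := real_inner_comm vD vP ▸ rfl
    linarith [real_inner_comm vP vD]


end
end

section
/- With v = v_P + v_D, the vector -v_P is the metric projection of -v onto the polar cone of the recession cone of cl(dom f): -v_P = P_{(rec(cl dom f))°}(-v). -/
open scoped InnerProductSpace Pointwise Classical
open Filter Topology

noncomputable section

variable {H : Type*} [NormedAddCommGroup H] [InnerProductSpace ℝ H]

-- L1: variational inequality for min norm point
lemma aux_minnorm_vi {S : Set H} (hS : Convex ℝ S) {v : H} (hv : IsMinNormPoint S v)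
    {w : H} (hw : w ∈ S) : 0 ≤ ⟪w - v, v⟫_ℝ := by
  rw [real_inner_comm]
  set c : ℝ := ⟪v, w - v⟫_ℝ with hc
  set q : ℝ := ‖w - v‖ ^ 2 with hq
  have hq0 : 0 ≤ q := by positivity
  have key : ∀ t : ℝ, 0 < t → t ≤ 1 → 0 ≤ 2 * t * c + t ^ 2 * q := by
    intro t ht ht1
    have hmem : v + t • (w - v) ∈ S := by
      have h2 : (1 - t) • v + t • w ∈ S := hS hv.1 hw (by linarith) ht.le (by ring)
      have : (1 - t) • v + t • w = v + t • (w - v) := by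
        rw [smul_sub, sub_smul, one_smul]; abel
      rwa [this] at h2
    have hle : ‖v‖ ≤ ‖v + t • (w - v)‖ := hv.2 _ hmem
    have hsq : ‖v + t • (w - v)‖ ^ 2 = ‖v‖ ^ 2 + 2 * (t * c) + t ^ 2 * q := by
      rw [norm_add_sq_real, inner_smul_right, norm_smul, mul_pow]
      simp [hq, abs_of_pos ht, sq_abs]
      exact Or.inl hc.symm
    nlinarith [norm_nonneg v, norm_nonneg (v + t • (w - v))]
  by_contra hcon
  push_neg at hcon
  rcases eq_or_lt_of_le hq0 with hq0' | hq0'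
  · have := key 1 one_pos le_rfl
    nlinarith
  · have ht : 0 < min 1 (-c / q) := lt_min one_pos (div_pos (by linarith) hq0')
    have := key _ ht (min_le_left _ _)
    have h2 : min 1 (-c / q) * q ≤ -c := by
      calc min 1 (-c / q) * q ≤ (-c / q) * q := by
            apply mul_le_mul_of_nonneg_right (min_le_right _ _) hq0
        _ = -c := by field_simp
    nlinarith

-- L2: sufficient condition for projection
lemma aux_proj_suff {S : Set H} {x p : H} (hp : p ∈ S)
    (h : ∀ w ∈ S, ⟪x - p, w - p⟫_ℝ ≤ 0) : IsProjOn S x p := by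
  refine ⟨hp, fun w hw => ?_⟩
  rw [dist_eq_norm, dist_eq_norm]
  have hsq : ‖x - w‖ ^ 2 = ‖x - p‖ ^ 2 - 2 * ⟪x - p, w - p⟫_ℝ + ‖w - p‖ ^ 2 := by
    have : x - w = (x - p) - (w - p) := by abel
    rw [this, norm_sub_sq_real]
  have := h w hw
  nlinarith [norm_nonneg (x - w), norm_nonneg (x - p), sq_nonneg (‖w - p‖)]

-- L3: translation into a closed set
lemma aux_closure_add {S T : Set H} (hT : IsClosed T) {u : H}
    (h : ∀ s ∈ S, u + s ∈ T) {t : H} (ht : t ∈ closure S) : u + t ∈ T := by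
  have : u + t ∈ closure T :=
    map_mem_closure (continuous_add_left u) ht (fun s hs => h s hs)
  rwa [hT.closure_eq] at this

-- characterization of fdom of fconj
lemma aux_mem_fdom_fconj (h : H → EReal) (w : H) :
    w ∈ fdom (fconj h) ↔ ∃ r : ℝ, ∀ x : H, ((⟪x, w⟫_ℝ : ℝ) : EReal) - h x ≤ (r : EReal) := by
  constructor
  · intro hw
    refine ⟨(fconj h w).toReal, fun x => ?_⟩
    exact le_trans (le_iSup (fun x => ((⟪x, w⟫_ℝ : ℝ) : EReal) - h x) x) (EReal.le_coe_toReal hw)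
  · rintro ⟨r, hr⟩
    exact ne_top_of_le_ne_top (EReal.coe_ne_top r) (iSup_le hr)

-- convexity of fdom
lemma aux_convex_fdom {h : H → EReal} (hcvx : ConvexFn h) : Convex ℝ (fdom h) := by
  intro x hx y hy a b ha hb hab
  have hxr : ∃ r : ℝ, h x ≤ (r : EReal) := ⟨(h x).toReal, EReal.le_coe_toReal hx⟩
  have hyr : ∃ r : ℝ, h y ≤ (r : EReal) := ⟨(h y).toReal, EReal.le_coe_toReal hy⟩
  obtain ⟨r, hr⟩ := hxr
  obtain ⟨s, hs⟩ := hyr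
  have hx' : (x, max r s) ∈ {p : H × ℝ | h p.1 ≤ (p.2 : EReal)} :=
    le_trans hr (EReal.coe_le_coe_iff.2 (le_max_left _ _))
  have hy' : (y, max r s) ∈ {p : H × ℝ | h p.1 ≤ (p.2 : EReal)} :=
    le_trans hs (EReal.coe_le_coe_iff.2 (le_max_right _ _))
  have := hcvx hx' hy' ha hb hab
  have heq : (a • ((x, max r s) : H × ℝ) + b • (y, max r s)).2 = max r s := by
    simp only [Prod.smul_def, Prod.snd_add, smul_eq_mul]
    linear_combination (max r s) * hab
  have hfst : (a • ((x, max r s) : H × ℝ) + b • (y, max r s)).1 = a • x + b • y := rfl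
  have hle : h (a • x + b • y) ≤ ((max r s : ℝ) : EReal) := by
    have h2 := this
    simp only [Set.mem_setOf_eq, hfst, heq] at h2
    exact h2
  exact ne_top_of_le_ne_top (EReal.coe_ne_top _) hle

-- convexity of fdom of fconj
lemma aux_convex_fdom_fconj {h : H → EReal} (hp : ProperFn h) :
    Convex ℝ (fdom (fconj h)) := by
  intro u₁ h₁ u₂ h₂ a b ha hb hab
  rw [aux_mem_fdom_fconj] at h₁ h₂ ⊢
  obtain ⟨r₁, hr₁⟩ := h₁
  obtain ⟨r₂, hr₂⟩ := h₂
  refine ⟨a * r₁ + b * r₂, fun x => ?_⟩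
  by_cases hx : h x = ⊤
  · rw [hx, EReal.sub_top]; exact bot_le
  · obtain ⟨c, hc⟩ : ∃ c : ℝ, h x = (c : EReal) :=
      ⟨(h x).toReal, (EReal.coe_toReal hx (hp.1 x)).symm⟩
    have e₁ : ⟪x, u₁⟫_ℝ - c ≤ r₁ := by
      have := hr₁ x
      rw [hc, ← EReal.coe_sub, EReal.coe_le_coe_iff] at this
      exact this
    have e₂ : ⟪x, u₂⟫_ℝ - c ≤ r₂ := by
      have := hr₂ x
      rw [hc, ← EReal.coe_sub, EReal.coe_le_coe_iff] at this
      exact this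
    rw [hc, ← EReal.coe_sub, EReal.coe_le_coe_iff]
    have hinner : ⟪x, a • u₁ + b • u₂⟫_ℝ = a * ⟪x, u₁⟫_ℝ + b * ⟪x, u₂⟫_ℝ := by
      rw [inner_add_right, real_inner_smul_right, real_inner_smul_right]
    rw [hinner]
    have hc' : a * c + b * c = c := by linear_combination c * hab
    nlinarith [mul_le_mul_of_nonneg_left e₁ ha, mul_le_mul_of_nonneg_left e₂ hb, hc']

-- L4: barrier directions shift the conjugate domain
lemma aux_conj_dom_shift {h : H → EReal} (hp : ProperFn h) {u : H} {M : ℝ}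
    (hb : ∀ x ∈ fdom h, ⟪x, u⟫_ℝ ≤ M) :
    ∀ w ∈ fdom (fconj h), w + u ∈ fdom (fconj h) := by
  intro w hw
  have hle : fconj h (w + u) ≤ fconj h w + (M : EReal) := by
    apply iSup_le
    intro x
    by_cases hx : h x = ⊤
    · rw [hx, EReal.sub_top]; exact bot_le
    · obtain ⟨c, hc⟩ : ∃ c : ℝ, h x = (c : EReal) :=
        ⟨(h x).toReal, (EReal.coe_toReal hx (hp.1 x)).symm⟩
      have step1 : ((⟪x, w + u⟫_ℝ : ℝ) : EReal) - h x
          ≤ ((⟪x, w⟫_ℝ - c + M : ℝ) : EReal) := by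
        rw [hc, ← EReal.coe_sub, EReal.coe_le_coe_iff, inner_add_right]
        have := hb x hx
        linarith
      have step2 : ((⟪x, w⟫_ℝ - c + M : ℝ) : EReal) ≤ fconj h w + (M : EReal) := by
        rw [EReal.coe_add]
        apply add_le_add_left
        have : ((⟪x, w⟫_ℝ - c : ℝ) : EReal) = ((⟪x, w⟫_ℝ : ℝ) : EReal) - h x := by
          rw [hc, EReal.coe_sub]
        rw [this]
        exact le_iSup (fun x => ((⟪x, w⟫_ℝ : ℝ) : EReal) - h x) x
      exact le_trans step1 step2
  exact ne_top_of_le_ne_top (EReal.add_lt_top hw (EReal.coe_ne_top M)).ne hle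

-- L6: separation lemma
lemma aux_rec_of_sep [CompleteSpace H] {h : H → EReal} (hcvx : Convex ℝ (fdom h))
    {d : H} (hkey : ∀ (u : H) (M : ℝ), (∀ x ∈ fdom h, ⟪x, u⟫_ℝ ≤ M) → 0 ≤ ⟪u, d⟫_ℝ) :
    ∀ z ∈ closure (fdom h), -d + z ∈ closure (fdom h) := by
  intro z hz
  by_contra hzc
  obtain ⟨φ, s, hφ, hs⟩ :=
    geometric_hahn_banach_closed_point hcvx.closure isClosed_closure hzc
  set u := (InnerProductSpace.toDual ℝ H).symm φ with hu
  have hux : ∀ x : H, ⟪x, u⟫_ℝ = φ x := by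
    intro x; rw [real_inner_comm, hu, InnerProductSpace.toDual_symm_apply]
  have hbar : ∀ x ∈ fdom h, ⟪x, u⟫_ℝ ≤ s := by
    intro x hx
    rw [hux]
    exact (hφ x (subset_closure hx)).le
  have h0 : 0 ≤ φ d := by
    have := hkey u s hbar
    rwa [real_inner_comm, hux d] at this
  have hs' : s < -φ d + φ z := by rwa [map_add, map_neg] at hs
  have hz' : φ z < s := hφ z hz
  linarith


theorem neg_vP_eq_proj_polar_recCone {H : Type*} [NormedAddCommGroup H] [InnerProductSpace ℝ H]
    [FiniteDimensional ℝ H]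
    (f g : H → EReal)
    (hf_prop : ProperFn f) (hf_lsc : LowerSemicontinuous f) (hf_cvx : ConvexFn f)
    (hg_prop : ProperFn g) (hg_lsc : LowerSemicontinuous g) (hg_cvx : ConvexFn g)
    (vP : H) (hvP : IsMinNormPoint (closure (fdom f - fdom g)) vP)
    (vD : H) (hvD : IsMinNormPoint (closure (fdom (fconj f) + fdom (fconj g))) vD)
    : IsProjOn (polarCone (recCone (closure (fdom f)))) (-(vP + vD)) (-vP) := by
  have hDconv : Convex ℝ (closure (fdom f - fdom g)) :=
    ((aux_convex_fdom hf_cvx).sub (aux_convex_fdom hg_cvx)).closure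
  have hEconv : Convex ℝ (closure (fdom (fconj f) + fdom (fconj g))) :=
    ((aux_convex_fdom_fconj hf_prop).add (aux_convex_fdom_fconj hg_prop)).closure
  -- shifting the dual domain gives a nonnegative inner product with vD
  have hEshift : ∀ u : H,
      (∀ s ∈ fdom (fconj f) + fdom (fconj g), u + s ∈ fdom (fconj f) + fdom (fconj g)) →
      0 ≤ ⟪u, vD⟫_ℝ := by
    intro u hu
    have hmem : u + vD ∈ closure (fdom (fconj f) + fdom (fconj g)) :=
      aux_closure_add isClosed_closure (fun s hs => subset_closure (hu s hs)) hvD.1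
    rw [add_comm u vD] at hmem
    have h1 := aux_minnorm_vi hEconv hvD hmem
    rwa [add_sub_cancel_left] at h1
  -- barriers of dom f (resp. dom g) pair nonnegatively with vD
  have hkey_f : ∀ (u : H) (M : ℝ), (∀ x ∈ fdom f, ⟪x, u⟫_ℝ ≤ M) → 0 ≤ ⟪u, vD⟫_ℝ := by
    intro u M hb
    apply hEshift
    intro s hs
    rw [Set.mem_add] at hs
    obtain ⟨w₁, hw₁, w₂, hw₂, rfl⟩ := hs
    have heq : u + (w₁ + w₂) = (w₁ + u) + w₂ := by abel
    rw [heq]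
    exact Set.add_mem_add (aux_conj_dom_shift hf_prop hb w₁ hw₁) hw₂
  have hkey_g : ∀ (u : H) (M : ℝ), (∀ x ∈ fdom g, ⟪x, u⟫_ℝ ≤ M) → 0 ≤ ⟪u, vD⟫_ℝ := by
    intro u M hb
    apply hEshift
    intro s hs
    rw [Set.mem_add] at hs
    obtain ⟨w₁, hw₁, w₂, hw₂, rfl⟩ := hs
    have heq : u + (w₁ + w₂) = w₁ + (w₂ + u) := by abel
    rw [heq]
    exact Set.add_mem_add hw₁ (aux_conj_dom_shift hg_prop hb w₂ hw₂)
  -- -vD is a recession direction of cl(dom f) and of cl(dom g)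
  have hrecf : ∀ z ∈ closure (fdom f), -vD + z ∈ closure (fdom f) :=
    aux_rec_of_sep (aux_convex_fdom hf_cvx) hkey_f
  have hrecg : ∀ z ∈ closure (fdom g), -vD + z ∈ closure (fdom g) :=
    aux_rec_of_sep (aux_convex_fdom hg_cvx) hkey_g
  -- ⟪vD, vP⟫ ≥ 0
  have hvPvD : 0 ≤ ⟪vD, vP⟫_ℝ := by
    have hstep : ∀ d ∈ fdom f - fdom g, vD + d ∈ closure (fdom f - fdom g) := by
      intro d hd
      rw [Set.mem_sub] at hd
      obtain ⟨a, ha, b, hb, rfl⟩ := hd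
      have hb' : -vD + b ∈ closure (fdom g) := hrecg b (subset_closure hb)
      have heq : vD + (a - b) = a - (-vD + b) := by abel
      rw [heq]
      exact map_mem_closure (continuous_const.sub continuous_id) hb'
        (fun c hc => Set.sub_mem_sub ha hc)
    have hmem : vD + vP ∈ closure (fdom f - fdom g) :=
      aux_closure_add isClosed_closure hstep hvP.1
    have h1 := aux_minnorm_vi hDconv hvP hmem
    rwa [add_sub_cancel_right] at h1
  -- -vP lies in the polar cone
  have hmemK : -vP ∈ polarCone (recCone (closure (fdom f))) := by
    intro y hy
    have hstep : ∀ d ∈ fdom f - fdom g, y + d ∈ closure (fdom f - fdom g) := by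
      intro d hd
      rw [Set.mem_sub] at hd
      obtain ⟨a, ha, b, hb, rfl⟩ := hd
      have ha' : y + a ∈ closure (fdom f) := hy a (subset_closure ha)
      have heq : y + (a - b) = (y + a) - b := by abel
      rw [heq]
      exact map_mem_closure (f := fun c => c - b) (continuous_id.sub continuous_const) ha'
        (fun c hc => Set.sub_mem_sub hc hb)
    have hmem : y + vP ∈ closure (fdom f - fdom g) :=
      aux_closure_add isClosed_closure hstep hvP.1
    have h1 := aux_minnorm_vi hDconv hvP hmem
    rw [add_sub_cancel_right] at h1
    rw [inner_neg_right]
    linarith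
  -- conclude via the projection characterization
  apply aux_proj_suff hmemK
  intro w hw
  have hdm : -vD ∈ recCone (closure (fdom f)) := hrecf
  have h2 : 0 ≤ ⟪vD, w⟫_ℝ := by
    have := hw (-vD) hdm
    rw [inner_neg_left] at this
    linarith
  have heq : -(vP + vD) - (-vP) = -vD := by abel
  have heq2 : w - (-vP) = w + vP := by abel
  rw [heq, heq2, inner_neg_left, inner_add_right]
  linarith

end
end
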